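/- Let K̃ be a real-valued function on the closed triangle T = {(x,y) : 0 ≤ y ≤ x ≤ 1} which is C² on T, satisfies K̃ ≥ 0 on T, and satisfies ∂ₓK̃ ≤ 0, ∂ᵧK̃ ≥ 0 and ∂ₓᵧK̃ ≤ 0 at every point of D₋ = {(x,y) : 0 < y < x < 1}. Let ψ : (0,1) → (0,∞) be an arbitrary positive function, and define the symmetric kernel K on (0,1)×(0,1) by K(x,y) = K̃(max(x,y), min(x,y)) / (ψ(x) ψ(y)). Then K is semi-positive definite: for any points t₁, …, t_m ∈ (0,1) and any reals c₁, …, c_m one has ∑_{i=1}^m ∑_{j=1}^m K(t_i, t_j) c_i c_j ≥ 0. -/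

import Mathlib

open MeasureTheory Set

/-- The closed lower triangle `T = {(x,y) : 0 ≤ y ≤ x ≤ 1}`. -/
def lowerTriangle : Set (ℝ × ℝ) := {p | 0 ≤ p.2 ∧ p.2 ≤ p.1 ∧ p.1 ≤ 1}

/-- The open lower triangle `D₋ = {(x,y) : 0 < y < x < 1}`. -/
def lowerTriangleOpen : Set (ℝ × ℝ) := {p | 0 < p.2 ∧ p.2 < p.1 ∧ p.1 < 1}

open Finset in
lemma tele_sum (f : ℕ → ℝ) : ∀ q n, q ≤ n → ∑ l ∈ Finset.Icc q n, (f l - f (l+1)) = f q - f (n+1) := by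
  intro q n
  induction n with
  | zero => intro h; interval_cases q; simp
  | succ d hd =>
    intro h
    rcases eq_or_lt_of_le h with h' | h'
    · subst h'; simp
    · rw [Finset.sum_Icc_succ_top (by omega), hd (by omega)]; ring

open Finset in
lemma tele_sum' (F : ℕ → ℝ) (p : ℕ) : ∑ k ∈ Finset.Icc 1 p, (F k - F (k-1)) = F p - F 0 := by
  induction p with
  | zero => simp
  | succ d hd => rw [Finset.sum_Icc_succ_top (by omega), hd]; simp

open Finset in
lemma key_psd (n : ℕ) (G : ℕ → ℕ → ℝ) (a : ℕ → ℝ)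
    (h1 : 1 ≤ n → 0 ≤ G 1 n)
    (h2 : ∀ l, 1 ≤ l → l < n → G 1 (l+1) ≤ G 1 l)
    (h3 : ∀ k, 2 ≤ k → k ≤ n → G (k-1) n ≤ G k n)
    (h4 : ∀ k l, 2 ≤ k → k ≤ l → l < n → G (k-1) l + G k (l+1) ≤ G (k-1) (l+1) + G k l) :
    0 ≤ ∑ i ∈ Finset.Icc 1 n, ∑ j ∈ Finset.Icc 1 n, a i * a j * G (min i j) (max i j) := by
  classical
  set B : ℕ → ℕ → ℝ := fun k l => if 1 ≤ k ∧ k ≤ l ∧ l ≤ n then G k l else 0 with hB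
  set lam : ℕ → ℕ → ℝ := fun k l => B k l - B k (l+1) - (B (k-1) l - B (k-1) (l+1)) with hlamdef
  have hBpos : ∀ k l, 1 ≤ k → k ≤ l → l ≤ n → B k l = G k l := by
    intro k l hk hkl hln; simp only [hB]; rw [if_pos ⟨hk, hkl, hln⟩]
  have hB0 : ∀ k l, ¬(1 ≤ k ∧ k ≤ l ∧ l ≤ n) → B k l = 0 := by
    intro k l h; simp only [hB]; rw [if_neg h]
  have hlam_nonneg : ∀ k l, 1 ≤ k → k ≤ l → l ≤ n → 0 ≤ lam k l := by
    intro k l hk hkl hln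
    simp only [hlamdef]
    rcases eq_or_lt_of_le hk with hk1 | hk2 <;> rcases eq_or_lt_of_le hln with hln1 | hln2
    · -- k = 1, l = n
      rw [← hk1, hln1, hBpos 1 n (by omega) (by omega) le_rfl,
        hB0 1 (n+1) (by omega), hB0 0 n (by omega), hB0 0 (n+1) (by omega)]
      have := h1 (by omega); linarith
    · -- k = 1, l < n
      rw [← hk1, hBpos 1 l (by omega) (by omega) hln,
        hBpos 1 (l+1) (by omega) (by omega) (by omega),
        hB0 0 l (by omega), hB0 0 (l+1) (by omega)]
      have := h2 l (by omega) hln2; linarith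
    · -- 2 ≤ k, l = n
      rw [hln1, hBpos k n hk (by omega) le_rfl, hB0 k (n+1) (by omega),
        hBpos (k-1) n (by omega) (by omega) le_rfl, hB0 (k-1) (n+1) (by omega)]
      have := h3 k (by omega) (by omega); linarith
    · -- 2 ≤ k, l < n
      rw [hBpos k l hk hkl hln, hBpos k (l+1) hk (by omega) (by omega),
        hBpos (k-1) l (by omega) (by omega) hln,
        hBpos (k-1) (l+1) (by omega) (by omega) (by omega)]
      have := h4 k l (by omega) hkl hln2; linarith
  have htele : ∀ p q, 1 ≤ p → p ≤ q → q ≤ n →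
      ∑ k ∈ Finset.Icc 1 p, ∑ l ∈ Finset.Icc q n, lam k l = G p q := by
    intro p q hp hpq hqn
    have hinner : ∀ k, ∑ l ∈ Finset.Icc q n, lam k l = B k q - B (k-1) q := by
      intro k
      have e1 : ∑ l ∈ Finset.Icc q n, lam k l
          = (∑ l ∈ Finset.Icc q n, (B k l - B k (l+1)))
            - ∑ l ∈ Finset.Icc q n, (B (k-1) l - B (k-1) (l+1)) := by
        rw [← Finset.sum_sub_distrib]
      rw [e1, tele_sum (B k) q n hqn, tele_sum (B (k-1)) q n hqn,
        hB0 k (n+1) (by omega), hB0 (k-1) (n+1) (by omega)]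
      ring
    calc ∑ k ∈ Finset.Icc 1 p, ∑ l ∈ Finset.Icc q n, lam k l
        = ∑ k ∈ Finset.Icc 1 p, ((fun k => B k q) k - (fun k => B k q) (k-1)) := by
          exact Finset.sum_congr rfl fun k _ => hinner k
      _ = B p q - B 0 q := tele_sum' (fun k => B k q) p
      _ = G p q := by rw [hBpos p q hp hpq hqn, hB0 0 q (by omega)]; ring
  have hsplit : ∀ p q, 1 ≤ p → p ≤ q → q ≤ n →
      ∑ k ∈ Finset.Icc 1 n, ∑ l ∈ Finset.Icc 1 n,
        (if k ≤ p ∧ q ≤ l then lam k l else 0) = G p q := by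
    intro p q hp hpq hqn
    have hfil1 : (Finset.Icc 1 n).filter (fun l => q ≤ l) = Finset.Icc q n := by
      ext l; simp only [Finset.mem_filter, Finset.mem_Icc]; omega
    have hfil2 : (Finset.Icc 1 n).filter (fun k => k ≤ p) = Finset.Icc 1 p := by
      ext k; simp only [Finset.mem_filter, Finset.mem_Icc]; omega
    calc ∑ k ∈ Finset.Icc 1 n, ∑ l ∈ Finset.Icc 1 n, (if k ≤ p ∧ q ≤ l then lam k l else 0)
        = ∑ k ∈ Finset.Icc 1 n, (if k ≤ p then ∑ l ∈ Finset.Icc q n, lam k l else 0) := by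
          refine Finset.sum_congr rfl fun k _ => ?_
          by_cases hk : k ≤ p
          · rw [if_pos hk, ← hfil1, Finset.sum_filter]
            exact Finset.sum_congr rfl fun l _ => by simp [hk]
          · rw [if_neg hk]
            exact Finset.sum_eq_zero fun l _ => by simp [hk]
      _ = ∑ k ∈ Finset.Icc 1 p, ∑ l ∈ Finset.Icc q n, lam k l := by
          rw [← hfil2, Finset.sum_filter]
      _ = G p q := htele p q hp hpq hqn
  have hfact : ∀ (f g : ℕ → ℝ) (C : ℝ), ∑ i ∈ Finset.Icc 1 n, ∑ j ∈ Finset.Icc 1 n,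
      (f i * g j * C) = (∑ i ∈ Finset.Icc 1 n, f i) * (∑ j ∈ Finset.Icc 1 n, g j) * C := by
    intro f g C
    calc ∑ i ∈ Finset.Icc 1 n, ∑ j ∈ Finset.Icc 1 n, f i * g j * C
        = ∑ i ∈ Finset.Icc 1 n, (f i * ((∑ j ∈ Finset.Icc 1 n, g j) * C)) := by
          refine Finset.sum_congr rfl fun i _ => ?_
          rw [Finset.sum_mul, Finset.mul_sum]
          exact Finset.sum_congr rfl fun j _ => mul_assoc _ _ _
      _ = (∑ i ∈ Finset.Icc 1 n, f i) * ((∑ j ∈ Finset.Icc 1 n, g j) * C) := by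
          rw [← Finset.sum_mul]
      _ = (∑ i ∈ Finset.Icc 1 n, f i) * (∑ j ∈ Finset.Icc 1 n, g j) * C := by ring
  have hexpand : ∀ i j, i ∈ Finset.Icc 1 n → j ∈ Finset.Icc 1 n →
      a i * a j * G (min i j) (max i j)
        = ∑ q ∈ (Finset.Icc 1 n) ×ˢ (Finset.Icc 1 n),
            (if q.1 ≤ i ∧ i ≤ q.2 then a i else 0) * (if q.1 ≤ j ∧ j ≤ q.2 then a j else 0)
              * lam q.1 q.2 := by
    intro i j hi hj
    rw [Finset.mem_Icc] at hi hj
    rw [Finset.sum_product]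
    have := hsplit (min i j) (max i j) (by omega) (by omega) (by omega)
    calc a i * a j * G (min i j) (max i j)
        = a i * a j * ∑ k ∈ Finset.Icc 1 n, ∑ l ∈ Finset.Icc 1 n,
            (if k ≤ min i j ∧ max i j ≤ l then lam k l else 0) := by rw [this]
      _ = ∑ k ∈ Finset.Icc 1 n, ∑ l ∈ Finset.Icc 1 n,
            a i * a j * (if k ≤ min i j ∧ max i j ≤ l then lam k l else 0) := by
          rw [Finset.mul_sum]
          exact Finset.sum_congr rfl fun k _ => by rw [Finset.mul_sum]
      _ = ∑ k ∈ Finset.Icc 1 n, ∑ l ∈ Finset.Icc 1 n,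
            (if k ≤ i ∧ i ≤ l then a i else 0) * (if k ≤ j ∧ j ≤ l then a j else 0)
              * lam k l := by
          refine Finset.sum_congr rfl fun k _ => Finset.sum_congr rfl fun l _ => ?_
          have hiff : (k ≤ min i j ∧ max i j ≤ l) ↔ ((k ≤ i ∧ i ≤ l) ∧ (k ≤ j ∧ j ≤ l)) := by
            omega
          by_cases hA : k ≤ i ∧ i ≤ l
          · by_cases hB2 : k ≤ j ∧ j ≤ l
            · rw [if_pos (hiff.2 ⟨hA, hB2⟩), if_pos hA, if_pos hB2]
            · rw [if_neg (fun hc => hB2 (hiff.1 hc).2), if_neg hB2]; ring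
          · rw [if_neg (fun hc => hA (hiff.1 hc).1), if_neg hA]; ring
  calc (0:ℝ) ≤ ∑ q ∈ (Finset.Icc 1 n) ×ˢ (Finset.Icc 1 n),
        (∑ i ∈ Finset.Icc 1 n, (if q.1 ≤ i ∧ i ≤ q.2 then a i else 0))
          * (∑ j ∈ Finset.Icc 1 n, (if q.1 ≤ j ∧ j ≤ q.2 then a j else 0)) * lam q.1 q.2 := by
        refine Finset.sum_nonneg fun q hq => ?_
        rw [Finset.mem_product, Finset.mem_Icc, Finset.mem_Icc] at hq
        rcases le_or_gt q.1 q.2 with hle | hlt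
        · exact mul_nonneg (mul_self_nonneg _) (hlam_nonneg q.1 q.2 (by omega) hle (by omega))
        · have hz : (∑ i ∈ Finset.Icc 1 n, (if q.1 ≤ i ∧ i ≤ q.2 then a i else 0)) = 0 :=
            Finset.sum_eq_zero fun i _ => by rw [if_neg (by omega)]
          rw [hz]; ring_nf; simp
    _ = ∑ q ∈ (Finset.Icc 1 n) ×ˢ (Finset.Icc 1 n),
          ∑ p ∈ (Finset.Icc 1 n) ×ˢ (Finset.Icc 1 n),
            (if q.1 ≤ p.1 ∧ p.1 ≤ q.2 then a p.1 else 0)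
              * (if q.1 ≤ p.2 ∧ p.2 ≤ q.2 then a p.2 else 0) * lam q.1 q.2 := by
        refine Finset.sum_congr rfl fun q _ => ?_
        rw [Finset.sum_product]
        exact (hfact _ _ _).symm
    _ = ∑ p ∈ (Finset.Icc 1 n) ×ˢ (Finset.Icc 1 n),
          ∑ q ∈ (Finset.Icc 1 n) ×ˢ (Finset.Icc 1 n),
            (if q.1 ≤ p.1 ∧ p.1 ≤ q.2 then a p.1 else 0)
              * (if q.1 ≤ p.2 ∧ p.2 ≤ q.2 then a p.2 else 0) * lam q.1 q.2 :=
        Finset.sum_comm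
    _ = ∑ p ∈ (Finset.Icc 1 n) ×ˢ (Finset.Icc 1 n),
          a p.1 * a p.2 * G (min p.1 p.2) (max p.1 p.2) := by
        refine Finset.sum_congr rfl fun p hp => ?_
        rw [Finset.mem_product] at hp
        exact (hexpand p.1 p.2 hp.1 hp.2).symm
    _ = ∑ i ∈ Finset.Icc 1 n, ∑ j ∈ Finset.Icc 1 n, a i * a j * G (min i j) (max i j) := by
        rw [Finset.sum_product]


lemma kt_antitone_x {Kt Kx : ℝ → ℝ → ℝ}
    (hKx : ∀ x y : ℝ, (x, y) ∈ lowerTriangle →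
      HasDerivWithinAt (fun x' => Kt x' y) (Kx x y) (Icc y 1) x)
    (hsx : ∀ x y : ℝ, (x, y) ∈ lowerTriangleOpen → Kx x y ≤ 0)
    {y x1 x2 : ℝ} (hy : 0 < y) (h1 : y ≤ x1) (h12 : x1 ≤ x2) (h2 : x2 ≤ 1) :
    Kt x2 y ≤ Kt x1 y := by
  have hT : ∀ x ∈ Icc x1 x2, (x, y) ∈ lowerTriangle :=
    fun x hx => ⟨hy.le, le_trans h1 hx.1, le_trans hx.2 h2⟩
  have hsub : Icc x1 x2 ⊆ Icc y 1 := Icc_subset_Icc h1 h2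
  have hcont : ContinuousOn (fun x => Kt x y) (Icc x1 x2) := fun x hx =>
    ((hKx x y (hT x hx)).continuousWithinAt).mono hsub
  have hderiv : ∀ x ∈ interior (Icc x1 x2), HasDerivAt (fun x' => Kt x' y) (Kx x y) x := by
    intro x hx
    rw [interior_Icc] at hx
    exact (hKx x y (hT x (Ioo_subset_Icc_self hx))).hasDerivAt
      (Icc_mem_nhds (lt_of_le_of_lt h1 hx.1) (lt_of_lt_of_le hx.2 h2))
  have h := antitoneOn_of_deriv_nonpos (convex_Icc x1 x2) hcont
    (fun x hx => (hderiv x hx).differentiableAt.differentiableWithinAt)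
    (fun x hx => by
      rw [(hderiv x hx).deriv]
      rw [interior_Icc] at hx
      exact hsx x y ⟨hy, lt_of_le_of_lt h1 hx.1, lt_of_lt_of_le hx.2 h2⟩)
  exact h (left_mem_Icc.2 h12) (right_mem_Icc.2 h12) h12

lemma kt_mono_y {Kt Ky : ℝ → ℝ → ℝ}
    (hKy : ∀ x y : ℝ, (x, y) ∈ lowerTriangle →
      HasDerivWithinAt (fun y' => Kt x y') (Ky x y) (Icc 0 x) y)
    (hsy : ∀ x y : ℝ, (x, y) ∈ lowerTriangleOpen → 0 ≤ Ky x y)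
    {x y1 y2 : ℝ} (h0 : 0 ≤ y1) (h12 : y1 ≤ y2) (h2 : y2 ≤ x) (hx : x < 1) :
    Kt x y1 ≤ Kt x y2 := by
  have hT : ∀ y ∈ Icc y1 y2, (x, y) ∈ lowerTriangle :=
    fun y hy => ⟨le_trans h0 hy.1, le_trans hy.2 h2, hx.le⟩
  have hsub : Icc y1 y2 ⊆ Icc 0 x := Icc_subset_Icc h0 h2
  have hcont : ContinuousOn (fun y => Kt x y) (Icc y1 y2) := fun y hy =>
    ((hKy x y (hT y hy)).continuousWithinAt).mono hsub
  have hderiv : ∀ y ∈ interior (Icc y1 y2), HasDerivAt (fun y' => Kt x y') (Ky x y) y := by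
    intro y hy
    rw [interior_Icc] at hy
    exact (hKy x y (hT y (Ioo_subset_Icc_self hy))).hasDerivAt
      (Icc_mem_nhds (lt_of_le_of_lt h0 hy.1) (lt_of_lt_of_le hy.2 h2))
  have h := monotoneOn_of_deriv_nonneg (convex_Icc y1 y2) hcont
    (fun y hy => (hderiv y hy).differentiableAt.differentiableWithinAt)
    (fun y hy => by
      rw [(hderiv y hy).deriv]
      rw [interior_Icc] at hy
      exact hsy x y ⟨lt_of_le_of_lt h0 hy.1, lt_of_lt_of_le hy.2 h2, hx⟩)
  exact h (left_mem_Icc.2 h12) (right_mem_Icc.2 h12) h12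

lemma kx_antitone_y {Kx Kxy : ℝ → ℝ → ℝ}
    (hKxy : ∀ x y : ℝ, (x, y) ∈ lowerTriangle →
      HasDerivWithinAt (fun y' => Kx x y') (Kxy x y) (Icc 0 x) y)
    (hsxy : ∀ x y : ℝ, (x, y) ∈ lowerTriangleOpen → Kxy x y ≤ 0)
    {x y1 y2 : ℝ} (h0 : 0 ≤ y1) (h12 : y1 ≤ y2) (h2 : y2 ≤ x) (hx : x < 1) :
    Kx x y2 ≤ Kx x y1 := by
  have hT : ∀ y ∈ Icc y1 y2, (x, y) ∈ lowerTriangle :=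
    fun y hy => ⟨le_trans h0 hy.1, le_trans hy.2 h2, hx.le⟩
  have hsub : Icc y1 y2 ⊆ Icc 0 x := Icc_subset_Icc h0 h2
  have hcont : ContinuousOn (fun y => Kx x y) (Icc y1 y2) := fun y hy =>
    ((hKxy x y (hT y hy)).continuousWithinAt).mono hsub
  have hderiv : ∀ y ∈ interior (Icc y1 y2), HasDerivAt (fun y' => Kx x y') (Kxy x y) y := by
    intro y hy
    rw [interior_Icc] at hy
    exact (hKxy x y (hT y (Ioo_subset_Icc_self hy))).hasDerivAt
      (Icc_mem_nhds (lt_of_le_of_lt h0 hy.1) (lt_of_lt_of_le hy.2 h2))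
  have h := antitoneOn_of_deriv_nonpos (convex_Icc y1 y2) hcont
    (fun y hy => (hderiv y hy).differentiableAt.differentiableWithinAt)
    (fun y hy => by
      rw [(hderiv y hy).deriv]
      rw [interior_Icc] at hy
      exact hsxy x y ⟨lt_of_le_of_lt h0 hy.1, lt_of_lt_of_le hy.2 h2, hx⟩)
  exact h (left_mem_Icc.2 h12) (right_mem_Icc.2 h12) h12

lemma kt_second_diff {Kt Kx Kxy : ℝ → ℝ → ℝ}
    (hKx : ∀ x y : ℝ, (x, y) ∈ lowerTriangle →
      HasDerivWithinAt (fun x' => Kt x' y) (Kx x y) (Icc y 1) x)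
    (hKxy : ∀ x y : ℝ, (x, y) ∈ lowerTriangle →
      HasDerivWithinAt (fun y' => Kx x y') (Kxy x y) (Icc 0 x) y)
    (hsxy : ∀ x y : ℝ, (x, y) ∈ lowerTriangleOpen → Kxy x y ≤ 0)
    {y1 y2 x1 x2 : ℝ} (h0 : 0 ≤ y1) (hy12 : y1 ≤ y2) (hyx : y2 ≤ x1)
    (hx12 : x1 ≤ x2) (hx2 : x2 ≤ 1) :
    Kt x1 y1 + Kt x2 y2 ≤ Kt x2 y1 + Kt x1 y2 := by
  set f : ℝ → ℝ := fun x => Kt x y2 - Kt x y1 with hf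
  have hT2 : ∀ x ∈ Icc x1 x2, (x, y2) ∈ lowerTriangle :=
    fun x hx => ⟨le_trans h0 hy12, le_trans hyx hx.1, le_trans hx.2 hx2⟩
  have hT1 : ∀ x ∈ Icc x1 x2, (x, y1) ∈ lowerTriangle :=
    fun x hx => ⟨h0, le_trans hy12 (le_trans hyx hx.1), le_trans hx.2 hx2⟩
  have hsub : Icc x1 x2 ⊆ Icc y2 1 := Icc_subset_Icc hyx hx2
  have hdw : ∀ x ∈ Icc x1 x2,
      HasDerivWithinAt f (Kx x y2 - Kx x y1) (Icc y2 1) x := by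
    intro x hx
    exact (hKx x y2 (hT2 x hx)).sub
      ((hKx x y1 (hT1 x hx)).mono (Icc_subset_Icc hy12 le_rfl))
  have hcont : ContinuousOn f (Icc x1 x2) := fun x hx =>
    ((hdw x hx).continuousWithinAt).mono hsub
  have hderiv : ∀ x ∈ interior (Icc x1 x2), HasDerivAt f (Kx x y2 - Kx x y1) x := by
    intro x hx
    rw [interior_Icc] at hx
    exact (hdw x (Ioo_subset_Icc_self hx)).hasDerivAt
      (Icc_mem_nhds (lt_of_le_of_lt hyx hx.1) (lt_of_lt_of_le hx.2 hx2))
  have hanti := antitoneOn_of_deriv_nonpos (convex_Icc x1 x2) hcont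
    (fun x hx => (hderiv x hx).differentiableAt.differentiableWithinAt)
    (fun x hx => by
      rw [(hderiv x hx).deriv]
      rw [interior_Icc] at hx
      have hxlt1 : x < 1 := lt_of_lt_of_le hx.2 hx2
      have := kx_antitone_y hKxy hsxy h0 hy12 (le_trans hyx hx.1.le) hxlt1
      linarith)
  have hle := hanti (left_mem_Icc.2 hx12) (right_mem_Icc.2 hx12) hx12
  simp only [hf] at hle
  linarith

/-- If `K̃ ≥ 0` is C² on the closed triangle `T` (with partial derivatives
`Kx, Ky, Kxy` existing within `T` and continuous on `T`) with the sign conditions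
`∂ₓK̃ ≤ 0`, `∂ᵧK̃ ≥ 0`, `∂ₓᵧK̃ ≤ 0` on `D₋`, and `ψ : (0,1) → (0,∞)` is an arbitrary
positive function, then the symmetric kernel
`K(x,y) = K̃(max(x,y), min(x,y)) / (ψ(x) ψ(y))` is semi-positive definite on `(0,1)`. -/
theorem statement2
    (Kt Kx Ky Kxy : ℝ → ℝ → ℝ)
    (hKc : ContinuousOn (fun p : ℝ × ℝ => Kt p.1 p.2) lowerTriangle)
    (hKxc : ContinuousOn (fun p : ℝ × ℝ => Kx p.1 p.2) lowerTriangle)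
    (hKyc : ContinuousOn (fun p : ℝ × ℝ => Ky p.1 p.2) lowerTriangle)
    (hKxyc : ContinuousOn (fun p : ℝ × ℝ => Kxy p.1 p.2) lowerTriangle)
    (hKx : ∀ x y : ℝ, (x, y) ∈ lowerTriangle →
      HasDerivWithinAt (fun x' => Kt x' y) (Kx x y) (Icc y 1) x)
    (hKy : ∀ x y : ℝ, (x, y) ∈ lowerTriangle →
      HasDerivWithinAt (fun y' => Kt x y') (Ky x y) (Icc 0 x) y)
    (hKxy : ∀ x y : ℝ, (x, y) ∈ lowerTriangle →
      HasDerivWithinAt (fun y' => Kx x y') (Kxy x y) (Icc 0 x) y)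
    (hKnn : ∀ x y : ℝ, (x, y) ∈ lowerTriangle → 0 ≤ Kt x y)
    (hsx : ∀ x y : ℝ, (x, y) ∈ lowerTriangleOpen → Kx x y ≤ 0)
    (hsy : ∀ x y : ℝ, (x, y) ∈ lowerTriangleOpen → 0 ≤ Ky x y)
    (hsxy : ∀ x y : ℝ, (x, y) ∈ lowerTriangleOpen → Kxy x y ≤ 0)
    (ψ : ℝ → ℝ) (hψ : ∀ x ∈ Ioo (0:ℝ) 1, 0 < ψ x)
    (m : ℕ) (t : Fin m → ℝ) (ht : ∀ i, t i ∈ Ioo (0:ℝ) 1) (c : Fin m → ℝ) :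
    0 ≤ ∑ i : Fin m, ∑ j : Fin m,
      (Kt (max (t i) (t j)) (min (t i) (t j)) / (ψ (t i) * ψ (t j))) * c i * c j := by
  classical
  have hT : ∀ x y : ℝ, 0 ≤ y → y ≤ x → x ≤ 1 → (x, y) ∈ lowerTriangle :=
    fun x y a b c => ⟨a, b, c⟩
  set s : Finset ℝ := Finset.image t Finset.univ with hs
  have hsmem : ∀ x ∈ s, x ∈ Ioo (0:ℝ) 1 := by
    intro x hx
    rw [hs, Finset.mem_image] at hx
    obtain ⟨i, -, rfl⟩ := hx
    exact ht i
  set b : ℝ → ℝ := fun x => (∑ i ∈ Finset.univ.filter (fun i => t i = x), c i) / ψ x with hb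
  have hmap : ∀ i : Fin m, i ∈ (Finset.univ : Finset (Fin m)) → t i ∈ s :=
    fun i _ => Finset.mem_image_of_mem t (Finset.mem_univ i)
  -- Step A : group equal points
  have stepA : (∑ i : Fin m, ∑ j : Fin m,
        (Kt (max (t i) (t j)) (min (t i) (t j)) / (ψ (t i) * ψ (t j))) * c i * c j)
      = ∑ x ∈ s, ∑ y ∈ s, b x * b y * Kt (max x y) (min x y) := by
    calc (∑ i : Fin m, ∑ j : Fin m,
          (Kt (max (t i) (t j)) (min (t i) (t j)) / (ψ (t i) * ψ (t j))) * c i * c j)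
        = ∑ x ∈ s, ∑ i ∈ Finset.univ.filter (fun i => t i = x), ∑ j : Fin m,
            (Kt (max (t i) (t j)) (min (t i) (t j)) / (ψ (t i) * ψ (t j))) * c i * c j :=
          (Finset.sum_fiberwise_of_maps_to hmap _).symm
      _ = ∑ x ∈ s, ∑ i ∈ Finset.univ.filter (fun i => t i = x), ∑ y ∈ s,
            ∑ j ∈ Finset.univ.filter (fun j => t j = y),
            (Kt (max (t i) (t j)) (min (t i) (t j)) / (ψ (t i) * ψ (t j))) * c i * c j :=
          Finset.sum_congr rfl fun x _ => Finset.sum_congr rfl fun i _ =>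
            (Finset.sum_fiberwise_of_maps_to hmap _).symm
      _ = ∑ x ∈ s, ∑ y ∈ s, ∑ i ∈ Finset.univ.filter (fun i => t i = x),
            ∑ j ∈ Finset.univ.filter (fun j => t j = y),
            (Kt (max (t i) (t j)) (min (t i) (t j)) / (ψ (t i) * ψ (t j))) * c i * c j :=
          Finset.sum_congr rfl fun x _ => Finset.sum_comm
      _ = ∑ x ∈ s, ∑ y ∈ s, b x * b y * Kt (max x y) (min x y) := by
          refine Finset.sum_congr rfl fun x hx => Finset.sum_congr rfl fun y hy => ?_
          have hxI := hsmem x hx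
          have hyI := hsmem y hy
          calc ∑ i ∈ Finset.univ.filter (fun i => t i = x),
                ∑ j ∈ Finset.univ.filter (fun j => t j = y),
                (Kt (max (t i) (t j)) (min (t i) (t j)) / (ψ (t i) * ψ (t j))) * c i * c j
              = ∑ i ∈ Finset.univ.filter (fun i => t i = x),
                  ∑ j ∈ Finset.univ.filter (fun j => t j = y),
                  (Kt (max x y) (min x y) / (ψ x * ψ y)) * c i * c j := by
                refine Finset.sum_congr rfl fun i hi => Finset.sum_congr rfl fun j hj => ?_
                rw [Finset.mem_filter] at hi hj
                rw [hi.2, hj.2]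
            _ = ∑ i ∈ Finset.univ.filter (fun i => t i = x),
                  ((Kt (max x y) (min x y) / (ψ x * ψ y)) * c i *
                    ∑ j ∈ Finset.univ.filter (fun j => t j = y), c j) :=
                Finset.sum_congr rfl fun i _ => (Finset.mul_sum _ _ _).symm
            _ = (∑ i ∈ Finset.univ.filter (fun i => t i = x),
                  (Kt (max x y) (min x y) / (ψ x * ψ y)) * c i) *
                    ∑ j ∈ Finset.univ.filter (fun j => t j = y), c j := by
                rw [← Finset.sum_mul]
            _ = (Kt (max x y) (min x y) / (ψ x * ψ y)) *
                  (∑ i ∈ Finset.univ.filter (fun i => t i = x), c i) *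
                    ∑ j ∈ Finset.univ.filter (fun j => t j = y), c j := by
                rw [← Finset.mul_sum]
            _ = b x * b y * Kt (max x y) (min x y) := by
                rw [hb]
                have h1 : ψ x ≠ 0 := (hψ x hxI).ne'
                have h2 : ψ y ≠ 0 := (hψ y hyI).ne'
                field_simp
  -- Step B : sort the distinct points
  set n : ℕ := s.card with hn
  set e : Fin n ≃o {x // x ∈ s} := s.orderIsoOfFin rfl with he
  set v : ℕ → ℝ := fun k => if h : k < n then ((e ⟨k, h⟩ : {x // x ∈ s}) : ℝ) else 0 with hv
  have hvlt : ∀ {i j : ℕ}, i < j → j < n → v i < v j := by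
    intro i j hij hj
    have hi : i < n := lt_trans hij hj
    simp only [hv, dif_pos hi, dif_pos hj]
    exact Subtype.coe_lt_coe.2 (e.strictMono (Fin.mk_lt_mk.2 hij))
  have hvle : ∀ {i j : ℕ}, i ≤ j → j < n → v i ≤ v j := by
    intro i j hij hj
    rcases eq_or_lt_of_le hij with h | h
    · exact le_of_eq (by rw [h])
    · exact (hvlt h hj).le
  have hvmem : ∀ k, k < n → v k ∈ Ioo (0:ℝ) 1 := by
    intro k hk
    simp only [hv, dif_pos hk]
    exact hsmem _ (e ⟨k, hk⟩).2
  have hsumv : ∀ g : ℝ → ℝ, ∑ x ∈ s, g x = ∑ k ∈ Finset.range n, g (v k) := by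
    intro g
    rw [← Finset.sum_coe_sort s g, ← Fin.sum_univ_eq_sum_range (fun k => g (v k)) n]
    refine (Fintype.sum_equiv e.toEquiv _ _ fun k => ?_).symm
    simp only [hv, dif_pos k.isLt]
    rfl
  have stepB : ∑ x ∈ s, ∑ y ∈ s, b x * b y * Kt (max x y) (min x y)
      = ∑ k ∈ Finset.range n, ∑ l ∈ Finset.range n,
          b (v k) * b (v l) * Kt (max (v k) (v l)) (min (v k) (v l)) := by
    rw [hsumv (fun x => ∑ y ∈ s, b x * b y * Kt (max x y) (min x y))]
    exact Finset.sum_congr rfl fun k _ => hsumv _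
  -- Step C : apply the key lemma
  set G : ℕ → ℕ → ℝ := fun k l => Kt (v (l-1)) (v (k-1)) with hG
  set A : ℕ → ℝ := fun k => b (v (k-1)) with hA
  have sum_Icc1 : ∀ f : ℕ → ℝ, ∑ i ∈ Finset.Icc 1 n, f i = ∑ i ∈ Finset.range n, f (i+1) := by
    intro f
    rw [← Finset.Ico_add_one_right_eq_Icc, Finset.sum_Ico_eq_sum_range]
    simp [add_comm]
  have stepC : ∑ i ∈ Finset.Icc 1 n, ∑ j ∈ Finset.Icc 1 n, A i * A j * G (min i j) (max i j)
      = ∑ k ∈ Finset.range n, ∑ l ∈ Finset.range n,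
          b (v k) * b (v l) * Kt (max (v k) (v l)) (min (v k) (v l)) := by
    rw [sum_Icc1]
    refine Finset.sum_congr rfl fun k hk => ?_
    rw [sum_Icc1]
    refine Finset.sum_congr rfl fun l hl => ?_
    rw [Finset.mem_range] at hk hl
    simp only [hA, hG, Nat.add_sub_cancel]
    rw [show min (k+1) (l+1) - 1 = min k l from by omega,
      show max (k+1) (l+1) - 1 = max k l from by omega]
    rcases le_total k l with h | h
    · rw [min_eq_left h, max_eq_right h, max_eq_right (hvle h hl), min_eq_left (hvle h hl)]
    · rw [min_eq_right h, max_eq_left h, max_eq_left (hvle h hk), min_eq_right (hvle h hk)]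
  have h1' : 1 ≤ n → 0 ≤ G 1 n := by
    intro hn1
    simp only [hG]
    exact hKnn _ _ (hT _ _ (hvmem 0 (by omega)).1.le (hvle (Nat.zero_le _) (by omega))
      (hvmem (n-1) (by omega)).2.le)
  have h2' : ∀ l, 1 ≤ l → l < n → G 1 (l+1) ≤ G 1 l := by
    intro l h1 h2
    simp only [hG, Nat.add_sub_cancel]
    exact kt_antitone_x hKx hsx (hvmem 0 (by omega)).1 (hvle (Nat.zero_le _) (by omega))
      (hvle (by omega) h2) (hvmem l h2).2.le
  have h3' : ∀ k, 2 ≤ k → k ≤ n → G (k-1) n ≤ G k n := by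
    intro k h1 h2
    simp only [hG]
    rw [show k - 1 - 1 = k - 2 from by omega]
    exact kt_mono_y hKy hsy (hvmem (k-2) (by omega)).1.le (hvle (by omega) (by omega))
      (hvle (by omega) (by omega)) (hvmem (n-1) (by omega)).2
  have h4' : ∀ k l, 2 ≤ k → k ≤ l → l < n →
      G (k-1) l + G k (l+1) ≤ G (k-1) (l+1) + G k l := by
    intro k l h1 h2 h3
    simp only [hG, Nat.add_sub_cancel]
    rw [show k - 1 - 1 = k - 2 from by omega]
    exact kt_second_diff hKx hKxy hsxy (hvmem (k-2) (by omega)).1.le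
      (hvle (by omega) (by omega)) (hvle (by omega) (by omega))
      (hvle (by omega) h3) (hvmem l h3).2.le
  rw [stepA, stepB, ← stepC]
  exact key_psd n G A h1' h2' h3' h4'
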